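/- Let T ≥ 2 and let G_T : ℝ^T → ℝ be as in the lower-bound construction. Then for every x ∈ ℝ^T, the smallest eigenvalue of the Hessian of G_T at x satisfies λ_min(∇²G_T(x)) ≤ 700. -/

import Mathlib

open scoped RealInnerProductSpace

/-- The bump-like component function `Ψ` of the hard-instance construction. -/
noncomputable def Psi (x : ℝ) : ℝ :=
  if 1 / 2 < x then Real.exp (1 - 1 / (2 * x - 1) ^ 2) else 0

/-- The component function `Λ` of the hard-instance construction. -/
noncomputable def Lam (x : ℝ) : ℝ := 8 * (Real.exp (-x ^ 2 / 2) - 1)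

/-- The hard instance `G_T(x) = Ψ(1)Λ(x₁) + ∑_{i=2}^T [Ψ(-x_{i-1})Λ(-x_i) + Ψ(x_{i-1})Λ(x_i)]`
(coordinates are `0`-indexed in Lean: mathematical `x_i` is Lean's `x ⟨i-1, _⟩`). -/
noncomputable def G (T : ℕ) (x : EuclideanSpace ℝ (Fin T)) : ℝ :=
  ∑ i : Fin T,
    if (i : ℕ) = 0 then Psi 1 * Lam (x i)
    else
      Psi (-(x ⟨(i : ℕ) - 1, Nat.lt_of_le_of_lt (Nat.sub_le _ _) i.isLt⟩)) * Lam (-(x i)) +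
        Psi (x ⟨(i : ℕ) - 1, Nat.lt_of_le_of_lt (Nat.sub_le _ _) i.isLt⟩) * Lam (x i)

/-- The smallest eigenvalue of a (self-adjoint) operator on `ℝ^T`, as the infimum of the
Rayleigh quotient over the unit sphere. -/
noncomputable def lambdaMin {T : ℕ}
    (A : EuclideanSpace ℝ (Fin T) →L[ℝ] EuclideanSpace ℝ (Fin T)) : ℝ :=
  ⨅ u : {v : EuclideanSpace ℝ (Fin T) // ‖v‖ = 1}, ⟪u.1, A u.1⟫

/-! ### Auxiliary lemmas -/

noncomputable def lam' (t : ℝ) : ℝ := (-8 * t) * Real.exp (-t ^ 2 / 2)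

lemma psi_nonneg (t : ℝ) : 0 ≤ Psi t := by
  unfold Psi; split_ifs
  · exact (Real.exp_pos _).le
  · norm_num

lemma psi_le_three (t : ℝ) : Psi t ≤ 3 := by
  unfold Psi; split_ifs with h
  · have h0 : (0:ℝ) < 2*t-1 := by linarith
    have h1 : (0:ℝ) < (2*t-1)^2 := by positivity
    have : Real.exp (1 - 1/(2*t-1)^2) ≤ Real.exp 1 := by
      apply Real.exp_le_exp.mpr
      have : 0 < 1/(2*t-1)^2 := by positivity
      linarith
    have h2 : 1 / (2 * t - 1) ^ 2 = 1/(2*t-1)^2 := rfl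
    linarith [Real.exp_one_lt_d9]
  · norm_num

lemma psi_le_sq (t : ℝ) : Psi t ≤ 3 * (2*t-1)^2 := by
  unfold Psi; split_ifs with h
  · have h0 : (0:ℝ) < 2*t-1 := by linarith
    have h1 : (0:ℝ) < (2*t-1)^2 := by positivity
    have h2 : Real.exp (1 - 1/(2*t-1)^2) = Real.exp 1 * Real.exp (-(1/(2*t-1)^2)) := by
      rw [← Real.exp_add]; ring_nf
    have hinv : (0:ℝ) < 1/(2*t-1)^2 := by positivity
    have h3 : Real.exp (-(1/(2*t-1)^2)) ≤ (2*t-1)^2 := by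
      rw [Real.exp_neg]
      have hle : 1/(2*t-1)^2 ≤ Real.exp (1/(2*t-1)^2) := by
        linarith [Real.add_one_le_exp (1/(2*t-1)^2)]
      have := inv_anti₀ hinv hle
      simpa [one_div] using this
    rw [h2]
    exact mul_le_mul (by linarith [Real.exp_one_lt_d9]) h3 (Real.exp_pos _).le (by norm_num)
  · positivity

lemma psi_hasDerivAt_half : HasDerivAt Psi 0 (1/2 : ℝ) := by
  rw [hasDerivAt_iff_tendsto_slope]
  have hP : Psi (1/2 : ℝ) = 0 := by unfold Psi; norm_num
  apply squeeze_zero_norm' (a := fun x : ℝ => 12 * |x - 1/2|)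
  · filter_upwards [self_mem_nhdsWithin] with y hy
    rw [slope_def_field, hP, sub_zero, Real.norm_eq_abs, abs_div,
      div_le_iff₀ (by
        have hy' : y ≠ (1/2:ℝ) := hy
        have : y - 1/2 ≠ 0 := sub_ne_zero.mpr hy'
        positivity : (0:ℝ) < |y - 1/2|)]
    rw [abs_of_nonneg (psi_nonneg y)]
    calc Psi y ≤ 3 * (2*y-1)^2 := psi_le_sq y
      _ = 12 * |y - 1/2| * |y - 1/2| := by
          rw [mul_assoc, abs_mul_abs_self]; ring
  · have h1 : Filter.Tendsto (fun x : ℝ => x - 1/2) (nhds (1/2:ℝ)) (nhds 0) := by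
      have h0 : Filter.Tendsto (fun x : ℝ => x) (nhds (1/2:ℝ)) (nhds (1/2:ℝ)) :=
        Filter.tendsto_id
      have h0' : Filter.Tendsto (fun _ : ℝ => (1/2:ℝ)) (nhds (1/2:ℝ)) (nhds (1/2:ℝ)) :=
        tendsto_const_nhds
      simpa using h0.sub h0'
    have : Filter.Tendsto (fun x : ℝ => 12 * |x - 1/2|) (nhds (1/2)) (nhds 0) := by
      simpa using (h1.abs.const_mul (12:ℝ))
    exact this.mono_left nhdsWithin_le_nhds

lemma psi_diff (t : ℝ) : DifferentiableAt ℝ Psi t := by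
  rcases lt_trichotomy t (1/2 : ℝ) with h | h | h
  · have : Psi =ᶠ[nhds t] fun _ => 0 := by
      filter_upwards [Iio_mem_nhds h] with y hy
      unfold Psi
      rw [if_neg (by simp only [Set.mem_Iio] at hy; linarith)]
    exact (differentiableAt_const 0).congr_of_eventuallyEq this
  · rw [h]; exact psi_hasDerivAt_half.differentiableAt
  · have hd : DifferentiableAt ℝ (fun y : ℝ => Real.exp (1 - 1 / (2 * y - 1) ^ 2)) t := by
      have hne : ((2*t-1)^2 : ℝ) ≠ 0 := by
        have : (0:ℝ) < 2*t-1 := by linarith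
        positivity
      have hb : DifferentiableAt ℝ (fun y : ℝ => (2*y-1)^2) t :=
        ((differentiableAt_fun_id.const_mul (2:ℝ)).sub_const 1).pow 2
      exact ((differentiableAt_const (1:ℝ)).sub
        ((differentiableAt_const (1:ℝ)).div hb hne)).exp
    apply hd.congr_of_eventuallyEq
    filter_upwards [Ioi_mem_nhds h] with y hy
    unfold Psi
    rw [if_pos (by simpa using hy)]

lemma lam_hasDeriv (t : ℝ) : HasDerivAt Lam (lam' t) t := by
  unfold Lam lam'
  have h : HasDerivAt (fun s : ℝ => -s^2/2) (-t) t := by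
    have := ((hasDerivAt_pow 2 t).neg).div_const 2
    simpa using this.congr_deriv (by ring)
  have := (h.exp.sub_const 1).const_mul 8
  exact this.congr_deriv (by ring)

lemma lam'_hasDeriv (t : ℝ) : HasDerivAt lam' ((8*t^2 - 8) * Real.exp (-t^2/2)) t := by
  unfold lam'
  have h : HasDerivAt (fun s : ℝ => -s^2/2) (-t) t := by
    have := ((hasDerivAt_pow 2 t).neg).div_const 2
    simpa using this.congr_deriv (by ring)
  have h2 : HasDerivAt (fun s : ℝ => (-8*s)) (-8) t := by
    simpa using (hasDerivAt_id t).const_mul (-8 : ℝ)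
  have := h2.mul h.exp
  exact this.congr_deriv (by ring)

lemma lam'_neg (s : ℝ) : -lam' (-s) = lam' s := by
  unfold lam'; ring_nf

lemma lam''_le (s : ℝ) : (8*s^2 - 8) * Real.exp (-s^2/2) ≤ 16 := by
  have h1 : Real.exp (-s^2/2) * Real.exp (s^2/2) = 1 := by
    rw [← Real.exp_add]; ring_nf; exact Real.exp_zero
  have h2 : s^2/2 + 1 ≤ Real.exp (s^2/2) := Real.add_one_le_exp _
  have h3 : (0:ℝ) < Real.exp (-s^2/2) := Real.exp_pos _
  nlinarith [sq_nonneg s, mul_le_mul_of_nonneg_left h2 h3.le]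

/-- The summand of `G`. -/
noncomputable def termF (T : ℕ) (i : Fin T) (v : EuclideanSpace ℝ (Fin T)) : ℝ :=
  if (i : ℕ) = 0 then Psi 1 * Lam (v i)
  else
    Psi (-(v ⟨(i : ℕ) - 1, Nat.lt_of_le_of_lt (Nat.sub_le _ _) i.isLt⟩)) * Lam (-(v i)) +
      Psi (v ⟨(i : ℕ) - 1, Nat.lt_of_le_of_lt (Nat.sub_le _ _) i.isLt⟩) * Lam (v i)

lemma G_eq (T : ℕ) (v : EuclideanSpace ℝ (Fin T)) : G T v = ∑ i, termF T i v := rfl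

lemma diff_eval {T : ℕ} (i : Fin T) (y : EuclideanSpace ℝ (Fin T)) :
    DifferentiableAt ℝ (fun v : EuclideanSpace ℝ (Fin T) => v i) y :=
  (EuclideanSpace.proj (𝕜 := ℝ) i).differentiableAt

lemma termF_diff (T : ℕ) (i : Fin T) (y : EuclideanSpace ℝ (Fin T)) :
    DifferentiableAt ℝ (termF T i) y := by
  unfold termF
  by_cases h : (i : ℕ) = 0
  · simp only [if_pos h]
    exact ((lam_hasDeriv _).differentiableAt.comp y (diff_eval i y)).const_mul _
  · simp only [if_neg h]
    set k : Fin T := ⟨(i : ℕ) - 1, Nat.lt_of_le_of_lt (Nat.sub_le _ _) i.isLt⟩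
    have h1 : DifferentiableAt ℝ (fun v : EuclideanSpace ℝ (Fin T) => Psi (-(v k))) y :=
      (psi_diff _).comp y (diff_eval k y).neg
    have h2 : DifferentiableAt ℝ (fun v : EuclideanSpace ℝ (Fin T) => Lam (-(v i))) y :=
      (lam_hasDeriv _).differentiableAt.comp y (diff_eval i y).neg
    have h3 : DifferentiableAt ℝ (fun v : EuclideanSpace ℝ (Fin T) => Psi (v k)) y :=
      (psi_diff _).comp y (diff_eval k y)
    have h4 : DifferentiableAt ℝ (fun v : EuclideanSpace ℝ (Fin T) => Lam (v i)) y :=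
      (lam_hasDeriv _).differentiableAt.comp y (diff_eval i y)
    exact (h1.mul h2).add (h3.mul h4)

lemma G_diff (T : ℕ) (y : EuclideanSpace ℝ (Fin T)) : DifferentiableAt ℝ (G T) y := by
  have : DifferentiableAt ℝ (fun v => ∑ i, termF T i v) y :=
    DifferentiableAt.fun_sum fun i _ => termF_diff T i y
  exact this

/-- For every `x`, the smallest eigenvalue of the Hessian of `G_T` at `x`
is at most `700`. -/
theorem stmt_14 (T : ℕ) (hT : 2 ≤ T) (x : EuclideanSpace ℝ (Fin T)) :
    lambdaMin (fderiv ℝ (gradient (G T)) x) ≤ 700 := by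
  have hjlt : T - 1 < T := by omega
  have hplt : T - 2 < T := by omega
  set j : Fin T := ⟨T-1, hjlt⟩ with hjdef
  set p : Fin T := ⟨T-2, hplt⟩ with hpdef
  have hpj : p ≠ j := by
    rw [hpdef, hjdef, Ne, Fin.mk.injEq]; omega
  set e : EuclideanSpace ℝ (Fin T) := EuclideanSpace.single j 1 with hedef
  set A := fderiv ℝ (gradient (G T)) x with hAdef
  -- coordinates of a point on the line through `y` in direction `e`
  have hcoord : ∀ (y : EuclideanSpace ℝ (Fin T)) (t : ℝ) (k : Fin T), k ≠ j →
      (y + t • e) k = y k := by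
    intro y t k hk
    simp [hedef, EuclideanSpace.single_apply, hk, PiLp.add_apply, PiLp.smul_apply]
  have hcoordj : ∀ (y : EuclideanSpace ℝ (Fin T)) (t : ℝ), (y + t • e) j = y j + t := by
    intro y t
    simp [hedef, EuclideanSpace.single_apply, PiLp.add_apply, PiLp.smul_apply]
  -- the value of `G` along the line
  have hGline : ∀ (y : EuclideanSpace ℝ (Fin T)) (t : ℝ),
      G T (y + t • e) = (∑ i ∈ Finset.univ.erase j, termF T i y)
        + (Psi (-(y p)) * Lam (-(y j + t)) + Psi (y p) * Lam (y j + t)) := by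
    intro y t
    rw [G_eq, ← Finset.sum_erase_add _ _ (Finset.mem_univ j)]
    congr 1
    · apply Finset.sum_congr rfl
      intro i hi
      have hij : i ≠ j := (Finset.mem_erase.mp hi).1
      have hival : (i : ℕ) ≠ T - 1 := fun h => hij (Fin.ext h)
      unfold termF
      by_cases h : (i : ℕ) = 0
      · rw [if_pos h, if_pos h, hcoord y t i hij]
      · have hk : (⟨(i : ℕ) - 1, Nat.lt_of_le_of_lt (Nat.sub_le _ _) i.isLt⟩ : Fin T) ≠ j := by
          rw [hjdef, Ne, Fin.mk.injEq]
          have := i.isLt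
          omega
        rw [if_neg h, if_neg h, hcoord y t i hij, hcoord y t _ hk]
    · unfold termF
      have hj0 : (j : ℕ) ≠ 0 := by rw [hjdef]; simp; omega
      rw [if_neg hj0]
      have hk : (⟨(j : ℕ) - 1, Nat.lt_of_le_of_lt (Nat.sub_le _ _) j.isLt⟩ : Fin T) = p := by
        rw [hjdef, hpdef]
        apply Fin.ext
        simp
        omega
      rw [hk, hcoord y t p hpj, hcoordj y t]
  -- directional derivative of `G` in direction `e`
  have hDval : ∀ y : EuclideanSpace ℝ (Fin T),
      fderiv ℝ (G T) y e = (Psi (-(y p)) + Psi (y p)) * lam' (y j) := by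
    intro y
    have h1 : HasDerivAt (fun t : ℝ => y + t • e) e 0 := by
      simpa using ((hasDerivAt_id (0:ℝ)).smul_const e).const_add y
    have hline : HasDerivAt (fun t : ℝ => G T (y + t • e)) (fderiv ℝ (G T) y e) 0 :=
      (G_diff T y).hasFDerivAt.comp_hasDerivAt_of_eq 0 h1 (by simp)
    have ha : HasDerivAt (fun t : ℝ => Lam (y j + t)) (lam' (y j)) 0 := by
      have hid : HasDerivAt (fun t : ℝ => y j + t) 1 0 := (hasDerivAt_id 0).const_add (y j)
      exact ((lam_hasDeriv (y j + 0)).comp 0 hid).congr_deriv (by simp)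
    have hb : HasDerivAt (fun t : ℝ => Lam (-(y j + t))) (-lam' (-(y j))) 0 := by
      have hneg : HasDerivAt (fun t : ℝ => -(y j + t)) (-1) 0 :=
        ((hasDerivAt_id 0).const_add (y j)).neg
      exact ((lam_hasDeriv (-(y j + 0))).comp 0 hneg).congr_deriv (g' := -lam' (-(y j))) (by simp)
    have hline2 : HasDerivAt (fun t : ℝ => (∑ i ∈ Finset.univ.erase j, termF T i y)
        + (Psi (-(y p)) * Lam (-(y j + t)) + Psi (y p) * Lam (y j + t)))
        ((Psi (-(y p)) + Psi (y p)) * lam' (y j)) 0 := by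
      have := ((hb.const_mul (Psi (-(y p)))).add (ha.const_mul (Psi (y p)))).const_add
        (∑ i ∈ Finset.univ.erase j, termF T i y)
      refine this.congr_deriv ?_
      rw [← lam'_neg (y j)]
      ring
    have heq : (fun t : ℝ => G T (y + t • e)) = (fun t : ℝ =>
        (∑ i ∈ Finset.univ.erase j, termF T i y)
          + (Psi (-(y p)) * Lam (-(y j + t)) + Psi (y p) * Lam (y j + t))) :=
      funext (hGline y)
    rw [heq] at hline
    exact hline.unique hline2
  -- the `j`-th component of the gradient
  have hgradcomp : ∀ y : EuclideanSpace ℝ (Fin T),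
      gradient (G T) y j = (Psi (-(y p)) + Psi (y p)) * lam' (y j) := by
    intro y
    have h1 : ⟪gradient (G T) y, e⟫ = fderiv ℝ (G T) y e := by
      rw [show ⟪gradient (G T) y, e⟫
          = (InnerProductSpace.toDual ℝ _ (gradient (G T) y)) e from
        (InnerProductSpace.toDual_apply_apply).symm]
      rw [gradient, LinearIsometryEquiv.apply_symm_apply]
    have h2 : ⟪gradient (G T) y, e⟫ = gradient (G T) y j := by
      rw [hedef, EuclideanSpace.inner_single_right]
      simp
    rw [← h2, h1, hDval y]
  have he : ‖e‖ = 1 := by rw [hedef, EuclideanSpace.norm_single]; norm_num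
  -- the quadratic form at `e` is at most 700
  have key : ⟪e, A e⟫ ≤ 700 := by
    by_cases hdiff : DifferentiableAt ℝ (gradient (G T)) x
    · have hgrad : HasFDerivAt (gradient (G T)) A x := hdiff.hasFDerivAt
      have hproj := (EuclideanSpace.proj j (𝕜 := ℝ)).hasFDerivAt.comp x hgrad
      have heq : ((EuclideanSpace.proj j (𝕜 := ℝ)) ∘ (gradient (G T)))
          = fun y => (Psi (-(y p)) + Psi (y p)) * lam' (y j) :=
        funext fun y => hgradcomp y
      rw [heq] at hproj
      have h1 : HasDerivAt (fun t : ℝ => x + t • e) e 0 := by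
        simpa using ((hasDerivAt_id (0:ℝ)).smul_const e).const_add x
      have h2' := hproj.comp_hasDerivAt_of_eq 0 h1 (by simp)
      have h2 : HasDerivAt (fun t : ℝ => (Psi (-((x + t • e) p)) + Psi ((x + t • e) p))
          * lam' ((x + t • e) j)) (((EuclideanSpace.proj j (𝕜 := ℝ)).comp A) e) 0 := h2'
      have heq2 : (fun t : ℝ => (Psi (-((x + t • e) p)) + Psi ((x + t • e) p))
          * lam' ((x + t • e) j))
          = fun t : ℝ => (Psi (-(x p)) + Psi (x p)) * lam' (x j + t) := by
        funext t
        rw [hcoord x t p hpj, hcoordj x t]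
      rw [heq2] at h2
      have h3 : HasDerivAt (fun t : ℝ => (Psi (-(x p)) + Psi (x p)) * lam' (x j + t))
          ((Psi (-(x p)) + Psi (x p)) * ((8*(x j)^2 - 8) * Real.exp (-(x j)^2/2))) 0 := by
        have hid : HasDerivAt (fun t : ℝ => x j + t) 1 0 := (hasDerivAt_id 0).const_add (x j)
        have := (lam'_hasDeriv (x j + 0)).comp 0 hid
        simpa using this.const_mul (Psi (-(x p)) + Psi (x p))
      have h4 := h2.unique h3
      have h5 : ⟪e, A e⟫ = A e j := by
        rw [hedef, EuclideanSpace.inner_single_left]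
        simp
      have h6 : A e j = ((EuclideanSpace.proj j (𝕜 := ℝ)).comp A) e := rfl
      rw [h5, h6, h4]
      have hb1 : 0 ≤ Psi (-(x p)) + Psi (x p) :=
        add_nonneg (psi_nonneg _) (psi_nonneg _)
      have hb2 : Psi (-(x p)) + Psi (x p) ≤ 6 := by
        linarith [psi_le_three (-(x p)), psi_le_three (x p)]
      have hb3 := lam''_le (x j)
      nlinarith
    · rw [hAdef, fderiv_zero_of_not_differentiableAt hdiff]
      simp
  -- conclude via the infimum
  have hbdd : BddBelow (Set.range fun u : {v : EuclideanSpace ℝ (Fin T) // ‖v‖ = 1} =>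
      ⟪u.1, A u.1⟫) := by
    refine ⟨-‖A‖, ?_⟩
    rintro r ⟨u, rfl⟩
    have h1 : |⟪u.1, A u.1⟫| ≤ ‖u.1‖ * ‖A u.1‖ := abs_real_inner_le_norm _ _
    have h2 : ‖A u.1‖ ≤ ‖A‖ * ‖u.1‖ := A.le_opNorm u.1
    have h3 := neg_abs_le ⟪u.1, A u.1⟫
    rw [u.2] at h1 h2
    simp only [one_mul, mul_one] at h1 h2
    linarith
  calc lambdaMin A ≤ ⟪e, A e⟫ := ciInf_le hbdd ⟨e, he⟩
    _ ≤ 700 := key
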